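/- Let P, P̄ ∈ ℝ^{S×S} be row-stochastic matrices, γ ∈ [0,1), φ₁,…,φ_d : S → ℝ, εM, εQ ≥ 0, and β > 0. Assume for every x ∈ S: (i) ∑_y |P(x,y) − P̄(x,y)| ≤ √2·εM + (2/β)·εQ; (ii) ∑_{i=1}^d |(Pφᵢ)(x) − (P̄φᵢ)(x)| ≤ √d·(β·εM + 2·εQ), where (Pφ)(x) := ∑_y P(x,y)·φ(y). Then for every v ∈ ℝ^S and every w ∈ ℝ^d: ‖(I − γP̄)⁻¹(γP − γP̄)v‖∞ ≤ (γ/(1−γ))·(√2·εM + (2/β)·εQ)·‖v − ∑_{i=1}^d wᵢφᵢ‖∞ + (γ√d/(1−γ))·(β·εM + 2·εQ)·‖w‖∞. -/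

import Mathlib

open Finset Matrix

/-- Supremum norm of a vector indexed by a finite type. -/
noncomputable def supNorm {S : Type*} [Fintype S] (v : S → ℝ) : ℝ := ⨆ x, |v x|

lemma abs_le_supNorm {S : Type*} [Fintype S] (v : S → ℝ) (x : S) : |v x| ≤ supNorm v :=
  le_ciSup (Set.Finite.bddAbove (Set.finite_range fun y => |v y|)) x

lemma supNorm_nonneg {S : Type*} [Fintype S] (v : S → ℝ) : 0 ≤ supNorm v := by
  cases isEmpty_or_nonempty S with
  | inl h => simp [supNorm, Real.iSup_of_isEmpty]
  | inr h => exact le_trans (abs_nonneg _) (abs_le_supNorm v (Classical.arbitrary S))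

lemma supNorm_le {S : Type*} [Fintype S] [Nonempty S] {v : S → ℝ} {c : ℝ}
    (h : ∀ x, |v x| ≤ c) : supNorm v ≤ c := ciSup_le h

lemma key_resolvent {S : Type*} [Fintype S] [Nonempty S] [DecidableEq S]
    (Pbar : Matrix S S ℝ) (γ : ℝ)
    (hPbar0 : ∀ x y, 0 ≤ Pbar x y) (hPbar1 : ∀ x, ∑ y, Pbar x y = 1)
    (hγ0 : 0 ≤ γ) (z : S → ℝ) :
    (1 - γ) * supNorm z ≤ supNorm (((1 : Matrix S S ℝ) - γ • Pbar).mulVec z) := by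
  set u := ((1 : Matrix S S ℝ) - γ • Pbar).mulVec z with hu
  have hux : ∀ x, u x = z x - γ * ∑ y, Pbar x y * z y := by
    intro x
    simp [hu, Matrix.sub_mulVec, Matrix.one_mulVec, Matrix.smul_mulVec,
      Matrix.mulVec, dotProduct]
  have hz : supNorm z ≤ supNorm u + γ * supNorm z := by
    apply supNorm_le
    intro x
    have h1 : z x = u x + γ * ∑ y, Pbar x y * z y := by rw [hux x]; ring
    have h2 : |γ * ∑ y, Pbar x y * z y| ≤ γ * supNorm z := by
      rw [abs_mul, abs_of_nonneg hγ0]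
      apply mul_le_mul_of_nonneg_left _ hγ0
      calc |∑ y, Pbar x y * z y| ≤ ∑ y, |Pbar x y * z y| := Finset.abs_sum_le_sum_abs _ _
        _ ≤ ∑ y, Pbar x y * supNorm z := by
            apply Finset.sum_le_sum
            intro y _
            rw [abs_mul, abs_of_nonneg (hPbar0 x y)]
            exact mul_le_mul_of_nonneg_left (abs_le_supNorm z y) (hPbar0 x y)
        _ = supNorm z := by rw [← Finset.sum_mul, hPbar1 x, one_mul]
    calc |z x| ≤ |u x| + |γ * ∑ y, Pbar x y * z y| := by rw [h1]; exact abs_add_le _ _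
      _ ≤ supNorm u + γ * supNorm z := add_le_add (abs_le_supNorm u x) h2
  linarith

theorem stmt12 {S : Type*} [Fintype S] [Nonempty S] [DecidableEq S]
    (P Pbar : Matrix S S ℝ) (γ : ℝ)
    (hP0 : ∀ x y, 0 ≤ P x y) (hP1 : ∀ x, ∑ y, P x y = 1)
    (hPbar0 : ∀ x y, 0 ≤ Pbar x y) (hPbar1 : ∀ x, ∑ y, Pbar x y = 1)
    (hγ0 : 0 ≤ γ) (hγ1 : γ < 1)
    (d : ℕ) (φ : Fin d → S → ℝ) (εM εQ β : ℝ)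
    (hεM : 0 ≤ εM) (hεQ : 0 ≤ εQ) (hβ : 0 < β)
    (hTV : ∀ x, ∑ y, |P x y - Pbar x y| ≤ Real.sqrt 2 * εM + (2 / β) * εQ)
    (hQ : ∀ x, ∑ i : Fin d, |(∑ y, P x y * φ i y) - ∑ y, Pbar x y * φ i y| ≤
      Real.sqrt d * (β * εM + 2 * εQ)) :
    ∀ v : S → ℝ, ∀ w : Fin d → ℝ,
      supNorm (((1 : Matrix S S ℝ) - γ • Pbar)⁻¹.mulVec ((γ • P - γ • Pbar).mulVec v)) ≤
        (γ / (1 - γ)) * (Real.sqrt 2 * εM + (2 / β) * εQ) *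
            supNorm (fun x => v x - ∑ i, w i * φ i x) +
          (γ * Real.sqrt d / (1 - γ)) * (β * εM + 2 * εQ) * supNorm w := by
  intro v w
  have h1γ : 0 < 1 - γ := by linarith
  set A := (1 : Matrix S S ℝ) - γ • Pbar with hA
  -- A is invertible
  have hinj : Function.Injective A.mulVec := by
    intro z1 z2 h
    have h0 : A.mulVec (z1 - z2) = 0 := by rw [Matrix.mulVec_sub, h, sub_self]
    have hk := key_resolvent Pbar γ hPbar0 hPbar1 hγ0 (z1 - z2)
    rw [← hA, h0] at hk
    have h00 : supNorm (0 : S → ℝ) = 0 := by simp [supNorm]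
    rw [h00] at hk
    have hsn : supNorm (z1 - z2) ≤ 0 := by nlinarith [supNorm_nonneg (z1 - z2)]
    funext x
    have := abs_le_supNorm (z1 - z2) x
    have : |(z1 - z2) x| ≤ 0 := le_trans this hsn
    have : (z1 - z2) x = 0 := abs_nonpos_iff.mp this
    simpa [sub_eq_zero] using this
  have hunit : IsUnit A := Matrix.mulVec_injective_iff_isUnit.mp hinj
  have hdet : IsUnit A.det := (Matrix.isUnit_iff_isUnit_det A).mp hunit
  set b := (γ • P - γ • Pbar).mulVec v with hb
  set z := A⁻¹.mulVec b with hz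
  have hAz : A.mulVec z = b := by
    rw [hz, Matrix.mulVec_mulVec, Matrix.mul_nonsing_inv _ hdet, Matrix.one_mulVec]
  have hkey := key_resolvent Pbar γ hPbar0 hPbar1 hγ0 z
  rw [← hA, hAz] at hkey
  -- bound b
  set r : S → ℝ := fun x => v x - ∑ i, w i * φ i x with hr
  set C1 := Real.sqrt 2 * εM + (2 / β) * εQ with hC1
  set C2 := Real.sqrt d * (β * εM + 2 * εQ) with hC2
  have hC1nn : 0 ≤ C1 := by
    have := Real.sqrt_nonneg 2
    have h2β : 0 ≤ 2 / β := le_of_lt (div_pos two_pos hβ)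
    positivity
  have hbbound : supNorm b ≤ γ * (C1 * supNorm r + C2 * supNorm w) := by
    apply supNorm_le
    intro x
    have hbx : b x = γ * ((∑ y, (P x y - Pbar x y) * r y) +
        ∑ i, w i * ∑ y, (P x y - Pbar x y) * φ i y) := by
      have hswap : ∑ i, w i * ∑ y, (P x y - Pbar x y) * φ i y
          = ∑ y, (P x y - Pbar x y) * ∑ i, w i * φ i y := by
        calc ∑ i, w i * ∑ y, (P x y - Pbar x y) * φ i y
            = ∑ i, ∑ y, (P x y - Pbar x y) * (w i * φ i y) := by
              apply Finset.sum_congr rfl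
              intro i _
              rw [Finset.mul_sum]
              apply Finset.sum_congr rfl
              intro y _; ring
          _ = ∑ y, ∑ i, (P x y - Pbar x y) * (w i * φ i y) := Finset.sum_comm
          _ = ∑ y, (P x y - Pbar x y) * ∑ i, w i * φ i y := by
              apply Finset.sum_congr rfl
              intro y _
              rw [Finset.mul_sum]
      rw [hswap, ← Finset.sum_add_distrib]
      simp only [hb, Matrix.mulVec, dotProduct, Matrix.sub_apply, Matrix.smul_apply,
        smul_eq_mul]
      rw [Finset.mul_sum]
      apply Finset.sum_congr rfl
      intro y _
      simp only [hr]
      ring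
    have hterm1 : |∑ y, (P x y - Pbar x y) * r y| ≤ C1 * supNorm r := by
      calc |∑ y, (P x y - Pbar x y) * r y| ≤ ∑ y, |(P x y - Pbar x y) * r y| :=
            Finset.abs_sum_le_sum_abs _ _
        _ ≤ ∑ y, |P x y - Pbar x y| * supNorm r := by
            apply Finset.sum_le_sum
            intro y _
            rw [abs_mul]
            exact mul_le_mul_of_nonneg_left (abs_le_supNorm r y) (abs_nonneg _)
        _ = (∑ y, |P x y - Pbar x y|) * supNorm r := by rw [Finset.sum_mul]
        _ ≤ C1 * supNorm r := mul_le_mul_of_nonneg_right (hTV x) (supNorm_nonneg r)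
    have hterm2 : |∑ i, w i * ∑ y, (P x y - Pbar x y) * φ i y| ≤ C2 * supNorm w := by
      have hT : ∀ i, ∑ y, (P x y - Pbar x y) * φ i y
          = (∑ y, P x y * φ i y) - ∑ y, Pbar x y * φ i y := by
        intro i
        rw [← Finset.sum_sub_distrib]
        apply Finset.sum_congr rfl
        intro y _; ring
      calc |∑ i, w i * ∑ y, (P x y - Pbar x y) * φ i y|
          ≤ ∑ i, |w i * ∑ y, (P x y - Pbar x y) * φ i y| := Finset.abs_sum_le_sum_abs _ _
        _ ≤ ∑ i, supNorm w * |∑ y, (P x y - Pbar x y) * φ i y| := by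
            apply Finset.sum_le_sum
            intro i _
            rw [abs_mul]
            exact mul_le_mul_of_nonneg_right (abs_le_supNorm w i) (abs_nonneg _)
        _ = supNorm w * ∑ i, |(∑ y, P x y * φ i y) - ∑ y, Pbar x y * φ i y| := by
            rw [Finset.mul_sum]
            apply Finset.sum_congr rfl
            intro i _
            rw [hT i]
        _ ≤ supNorm w * C2 := mul_le_mul_of_nonneg_left (hQ x) (supNorm_nonneg w)
        _ = C2 * supNorm w := mul_comm _ _
    calc |b x| = γ * |(∑ y, (P x y - Pbar x y) * r y) +
          ∑ i, w i * ∑ y, (P x y - Pbar x y) * φ i y| := by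
          rw [hbx, abs_mul, abs_of_nonneg hγ0]
      _ ≤ γ * (C1 * supNorm r + C2 * supNorm w) := by
          apply mul_le_mul_of_nonneg_left _ hγ0
          exact le_trans (abs_add_le _ _) (add_le_add hterm1 hterm2)
  have hfinal : supNorm z ≤ γ * (C1 * supNorm r + C2 * supNorm w) / (1 - γ) := by
    rw [le_div_iff₀ h1γ]
    calc supNorm z * (1 - γ) = (1 - γ) * supNorm z := mul_comm _ _
      _ ≤ supNorm b := hkey
      _ ≤ _ := hbbound
  have heq : γ * (C1 * supNorm r + C2 * supNorm w) / (1 - γ)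
      = (γ / (1 - γ)) * C1 * supNorm r
        + (γ * Real.sqrt d / (1 - γ)) * (β * εM + 2 * εQ) * supNorm w := by
    rw [hC2]
    field_simp
  rw [heq] at hfinal
  exact hfinal
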